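/- Let n be an odd perfect number and let q be a prime dividing n whose exponent β in the prime factorization of n is odd. Then q ≡ 1 (mod 4). -/
import Mathlib

lemma aux_sum_mod4 (q : ℕ) (hq : q % 4 = 3) :
    ∀ k, 4 ∣ ∑ i ∈ Finset.range (2 * k + 2), q ^ i := by
  intro k
  induction k with
  | zero => simp [Finset.sum_range_succ]; omega
  | succ k ih =>
    have h0 : 2 * (k + 1) + 2 = (2 * k + 2) + 1 + 1 := by ring
    rw [h0, Finset.sum_range_succ, Finset.sum_range_succ]
    have h1 : 4 ∣ q ^ (2 * k + 2) + q ^ (2 * k + 3) := by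
      have h2 : q ^ (2 * k + 2) + q ^ (2 * k + 3) = q ^ (2 * k + 2) * (1 + q) := by ring
      rw [h2]
      exact Dvd.dvd.mul_left (by omega) _
    have h3 : q ^ (2 * k + 2 + 1) = q ^ (2 * k + 3) := by ring_nf
    rw [h3]
    omega

/-- If `n` is an odd perfect number and `q` is a prime dividing `n` with odd
multiplicity, then `q ≡ 1 [MOD 4]`. -/
theorem stmt11 (n q : ℕ) (hn_odd : Odd n) (hn_perf : n.Perfect)
    (hq_prime : q.Prime) (hq_dvd : q ∣ n)
    (β : ℕ) (hβ : β = n.factorization q) (hβ_odd : Odd β) :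
    q % 4 = 1 := by
  have hn_pos : 0 < n := hn_perf.2
  have hn_ne : n ≠ 0 := hn_pos.ne'
  subst hβ
  set β := n.factorization q with hβ
  have hsplit : q ^ β * (n / q ^ β) = n := Nat.ordProj_mul_ordCompl_eq_self n q
  set m := n / q ^ β with hm
  have hcop : Nat.Coprime (q ^ β) m :=
    (Nat.coprime_ordCompl hq_prime hn_ne).pow_left β
  have hsum : ∑ d ∈ n.divisors, d = 2 * n :=
    (Nat.perfect_iff_sum_divisors_eq_two_mul hn_pos).mp hn_perf
  have hmul : (∑ d ∈ (q ^ β).divisors, d) * (∑ d ∈ m.divisors, d) = 2 * n := by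
    rw [← Nat.Coprime.sum_divisors_mul hcop, hsplit, hsum]
  have hpow : ∑ d ∈ (q ^ β).divisors, d = ∑ i ∈ Finset.range (β + 1), q ^ i := by
    rw [← ArithmeticFunction.sigma_one_apply,
      ArithmeticFunction.sigma_one_apply_prime_pow hq_prime]
  have hq_odd : q % 2 = 1 := by
    rcases hq_prime.eq_two_or_odd with h | h
    · subst h
      obtain ⟨c, hc⟩ := hq_dvd
      have := Nat.odd_iff.mp hn_odd
      omega
    · exact h
  by_contra hne
  have hq4 : q % 4 = 3 := by omega
  obtain ⟨k, hk⟩ := hβ_odd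
  have hdvd4 : 4 ∣ ∑ i ∈ Finset.range (β + 1), q ^ i := by
    have h0 : β + 1 = 2 * k + 2 := by omega
    rw [h0]
    exact aux_sum_mod4 q hq4 k
  have h4 : 4 ∣ 2 * n := by
    rw [← hmul, hpow]
    exact Dvd.dvd.mul_right hdvd4 _
  have : n % 2 = 1 := Nat.odd_iff.mp hn_odd
  omega
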